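/- Let α ∈ (0,1) and T_α : ℓ¹ → ℓ¹ as defined. Then for every k ≥ 1 and all x, y ∈ ℓ¹: ‖T_α^k(x) − T_α^k(y)‖_1 = α^k ( ‖x − y‖_1 + |√|x_1| − √|y_1|| − |x_1 − y_1| ). -/

import Mathlib

/-- The map `T_α : ℓ¹ → ℓ¹` from Example 1 of the paper, sending
`x = (x₁, x₂, …)` to `(0, α√|x₁|, α x₂, α x₃, …)` (here `0`-indexed: coordinate `0` of
the image is `0`, coordinate `1` is `α √|x 0|`, and coordinate `n + 2` is `α * x (n + 1)`). -/
noncomputable def Talpha (α : ℝ) (f : lp (fun _ : ℕ => ℝ) 1) : lp (fun _ : ℕ => ℝ) 1 :=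
  ⟨fun n => match n with
    | 0 => 0
    | 1 => α * Real.sqrt |f 0|
    | (n + 2) => α * f (n + 1), by
    apply memℓp_gen
    have h1 : Summable fun n : ℕ => ‖(f : ℕ → ℝ) n‖ := by
      have := (memℓp_gen_iff (p := 1) (by norm_num)).1 (lp.memℓp f)
      simpa using this
    have h2 : Summable fun n : ℕ => ‖(f : ℕ → ℝ) (n + 1)‖ :=
      (summable_nat_add_iff 1).2 h1
    have h3 : Summable fun n : ℕ => |α| * ‖(f : ℕ → ℝ) (n + 1)‖ := h2.mul_left _
    have h4 : Summable fun n : ℕ =>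
        ‖(fun n => match n with
          | 0 => (0 : ℝ)
          | 1 => α * Real.sqrt |f 0|
          | (n + 2) => α * f (n + 1)) n‖ := by
      rw [← summable_nat_add_iff 2]
      simpa [abs_mul] using h3
    simpa using h4⟩

lemma lp_norm_eq (f : lp (fun _ : ℕ => ℝ) 1) : ‖f‖ = ∑' n, |(f : ℕ → ℝ) n| := by
  have := lp.norm_eq_tsum_rpow (p := 1) (by norm_num) f
  simpa using this

lemma lp_summable (f : lp (fun _ : ℕ => ℝ) 1) : Summable fun n => |(f : ℕ → ℝ) n| := by
  have := (memℓp_gen_iff (p := 1) (by norm_num)).1 (lp.memℓp f)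
  simpa using this

lemma Talpha_coe (α : ℝ) (x : lp (fun _ : ℕ => ℝ) 1) (n : ℕ) :
    (Talpha α x : ℕ → ℝ) n = match n with
      | 0 => 0
      | 1 => α * Real.sqrt |x 0|
      | (n + 2) => α * x (n + 1) := rfl

set_option maxHeartbeats 1000000 in
lemma step (α : ℝ) (hα : 0 < α) (x y : lp (fun _ : ℕ => ℝ) 1) :
    ‖Talpha α x - Talpha α y‖ =
      α * (‖x - y‖ + abs (Real.sqrt |x 0| - Real.sqrt |y 0|) - |x 0 - y 0|) := by
  have e1 : ∀ n, ((x - y : lp (fun _ : ℕ => ℝ) 1) : ℕ → ℝ) n = x n - y n := by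
    intro n; simp
  have e2 : ∀ n, ((Talpha α x - Talpha α y : lp (fun _ : ℕ => ℝ) 1) : ℕ → ℝ) n =
      Talpha α x n - Talpha α y n := by
    intro n; simp
  have hxy : Summable fun n => |((x - y : lp (fun _ : ℕ => ℝ) 1) : ℕ → ℝ) n| := lp_summable _
  have hxy' : Summable fun n : ℕ => |x (n + 1) - y (n + 1)| := by
    have := (summable_nat_add_iff 1).2 hxy
    simpa [e1] using this
  set S : ℝ := ∑' n : ℕ, |x (n + 1) - y (n + 1)| with hS
  have hnxy : ‖x - y‖ = |x 0 - y 0| + S := by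
    rw [lp_norm_eq]
    rw [Summable.tsum_eq_zero_add hxy]
    simp only [e1]
    rfl
  have hd : Summable fun n => |((Talpha α x - Talpha α y : lp (fun _ : ℕ => ℝ) 1) : ℕ → ℝ) n| :=
    lp_summable _
  have hd1 : Summable fun n : ℕ =>
      |((Talpha α x - Talpha α y : lp (fun _ : ℕ => ℝ) 1) : ℕ → ℝ) (n + 1)| :=
    (summable_nat_add_iff 1).2 hd
  have hnT : ‖Talpha α x - Talpha α y‖ =
      |α| * abs (Real.sqrt |x 0| - Real.sqrt |y 0|) + ∑' n : ℕ, |α| * |x (n + 1) - y (n + 1)| := by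
    rw [lp_norm_eq, Summable.tsum_eq_zero_add hd, Summable.tsum_eq_zero_add hd1]
    have c0 : ((Talpha α x - Talpha α y : lp (fun _ : ℕ => ℝ) 1) : ℕ → ℝ) 0 = 0 := by
      rw [e2]; show (0:ℝ) - 0 = 0; norm_num
    have c1 : ((Talpha α x - Talpha α y : lp (fun _ : ℕ => ℝ) 1) : ℕ → ℝ) 1 =
        α * (Real.sqrt |x 0| - Real.sqrt |y 0|) := by
      rw [e2]; show α * Real.sqrt |x 0| - α * Real.sqrt |y 0| = _; ring
    have c2 : ∀ n : ℕ, ((Talpha α x - Talpha α y : lp (fun _ : ℕ => ℝ) 1) : ℕ → ℝ) (n + 2) =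
        α * (x (n + 1) - y (n + 1)) := by
      intro n; rw [e2]; show α * x (n + 1) - α * y (n + 1) = _; ring
    simp only [c0, c1, c2, abs_mul, abs_zero]
    ring
  rw [hnT, tsum_mul_left, hnxy, hS]
  rw [abs_of_pos hα]; ring

/-- for `α ∈ (0,1)`, `k ≥ 1` and all `x, y ∈ ℓ¹`,
`‖T_α^k x - T_α^k y‖₁ = α^k (‖x - y‖₁ + |√|x 0| - √|y 0|| - |x 0 - y 0|)`. -/
theorem stmt16 (α : ℝ) (hα : α ∈ Set.Ioo (0 : ℝ) 1) :
    ∀ k : ℕ, 1 ≤ k → ∀ x y : lp (fun _ : ℕ => ℝ) 1,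
      ‖(Talpha α)^[k] x - (Talpha α)^[k] y‖ =
        α ^ k * (‖x - y‖ + abs (Real.sqrt |x 0| - Real.sqrt |y 0|) - |x 0 - y 0|) := by
  intro k hk x y
  obtain ⟨m, rfl⟩ : ∃ m, k = m + 1 := ⟨k - 1, by omega⟩
  clear hk
  induction m generalizing x y with
  | zero => simpa using step α hα.1 x y
  | succ m ih =>
    rw [Function.iterate_succ_apply (Talpha α) (m+1) x, Function.iterate_succ_apply (Talpha α) (m+1) y]
    rw [ih (Talpha α x) (Talpha α y)]
    have h0x : (Talpha α x : ℕ → ℝ) 0 = 0 := rfl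
    have h0y : (Talpha α y : ℕ → ℝ) 0 = 0 := rfl
    rw [h0x, h0y, step α hα.1 x y]
    simp only [abs_zero, Real.sqrt_zero, sub_zero, sub_self, add_zero]
    ring
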